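/- Let r ≥ 2 and let ℓ ∈ (0,∞)^r satisfy F̄_r(ℓ) = 0 and ℓʳ ≥ log 3. Then min{ℓⁱ : i ∈ [r-1]} ≤ log(4r - 5). -/

import Mathlib

open Finset

lemma sum_powerset_prod' {ι : Type*} [DecidableEq ι] (s : Finset ι) (x : ι → ℝ) :
    ∑ S ∈ s.powerset, ∏ i ∈ S, x i = ∏ i ∈ s, (1 + x i) := by
  induction s using Finset.induction_on with
  | empty => simp
  | @insert a s ha ih =>
    rw [Finset.sum_powerset_insert ha, Finset.prod_insert ha, ← ih]
    have h2 : ∑ t ∈ s.powerset, ∏ i ∈ insert a t, x i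
        = ∑ t ∈ s.powerset, x a * ∏ i ∈ t, x i := by
      apply Finset.sum_congr rfl
      intro t ht
      rw [Finset.prod_insert (fun hat => ha (Finset.mem_powerset.mp ht hat))]
    rw [h2, ← Finset.mul_sum]
    ring

lemma key_identity {ι : Type*} [DecidableEq ι] (s : Finset ι) (x : ι → ℝ) :
    ∑ S ∈ s.powerset, (1 - 2 * (S.card : ℝ)) * ∏ i ∈ S, x i
      = ∏ i ∈ s, (1 + x i) - 2 * ∑ j ∈ s, x j * ∏ i ∈ s.erase j, (1 + x i) := by
  induction s using Finset.induction_on with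
  | empty => simp
  | @insert a s ha ih =>
    rw [Finset.sum_powerset_insert ha, Finset.prod_insert ha, Finset.sum_insert ha]
    have herase : (insert a s).erase a = s := Finset.erase_insert ha
    rw [herase]
    have h2 : ∑ t ∈ s.powerset, (1 - 2 * ((insert a t).card : ℝ)) * ∏ i ∈ insert a t, x i
        = ∑ t ∈ s.powerset, (1 - 2 * ((t.card : ℝ) + 1)) * (x a * ∏ i ∈ t, x i) := by
      apply Finset.sum_congr rfl
      intro t ht
      have hat : a ∉ t := fun hat => ha (Finset.mem_powerset.mp ht hat)
      rw [Finset.prod_insert hat, Finset.card_insert_of_notMem hat]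
      push_cast
      ring
    have h3 : ∑ j ∈ s, x j * ∏ i ∈ (insert a s).erase j, (1 + x i)
        = (1 + x a) * ∑ j ∈ s, x j * ∏ i ∈ s.erase j, (1 + x i) := by
      rw [Finset.mul_sum]
      apply Finset.sum_congr rfl
      intro j hj
      have hja : j ≠ a := fun h => ha (h ▸ hj)
      rw [Finset.erase_insert_of_ne hja.symm,
        Finset.prod_insert (fun h => ha (Finset.mem_of_mem_erase h))]
      ring
    rw [h2, h3]
    have expand : ∀ t : Finset ι, (1 - 2 * ((t.card : ℝ) + 1)) * (x a * ∏ i ∈ t, x i)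
        = x a * ((1 - 2 * (t.card : ℝ)) * ∏ i ∈ t, x i) - 2 * x a * ∏ i ∈ t, x i := by
      intro t; ring
    simp_rw [expand]
    rw [Finset.sum_sub_distrib, ← Finset.mul_sum, ← Finset.mul_sum,
      sum_powerset_prod' s x, ih]
    ring

/-- `F̄_r(ℓ) = ∑_{S⊆[r]} (1-2|S|) e^{-ℓ^S}`. -/
noncomputable def Fbar (r : ℕ) (ℓ : Fin r → ℝ) : ℝ :=
  ∑ S : Finset (Fin r), (1 - 2 * (S.card : ℝ)) * Real.exp (-(∑ i ∈ S, ℓ i))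

/-- If `F̄_r(ℓ) = 0` with positive lengths and the last edge satisfies
`ℓʳ ≥ log 3`, then some edge among the first `r - 1` has length at most
`log(4r - 5)`. -/
theorem min_edge_bound (r : ℕ) (hr : 2 ≤ r) (ℓ : Fin r → ℝ)
    (hpos : ∀ j, 0 < ℓ j) (hF : Fbar r ℓ = 0)
    (hlast : Real.log 3 ≤ ℓ ⟨r - 1, by omega⟩) :
    ∃ i : Fin r, (i : ℕ) < r - 1 ∧ ℓ i ≤ Real.log (4 * r - 5) := by
  set x : Fin r → ℝ := fun i => Real.exp (-ℓ i) with hxdef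
  have hx0 : ∀ i, 0 < x i := fun i => Real.exp_pos _
  have hx1 : ∀ i, 0 < 1 + x i := fun i => by have := hx0 i; linarith
  -- rewrite Fbar via key_identity
  have hFbar : Fbar r ℓ
      = ∏ i, (1 + x i) - 2 * ∑ j, x j * ∏ i ∈ Finset.univ.erase j, (1 + x i) := by
    rw [← key_identity Finset.univ x, Fbar, ← Finset.powerset_univ]
    apply Finset.sum_congr rfl
    intro S _
    congr 1
    rw [← Real.exp_sum]
    congr 1
    rw [← Finset.sum_neg_distrib]
  -- the transcendental equation
  set P : ℝ := ∏ i, (1 + x i) with hP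
  have hPpos : 0 < P := Finset.prod_pos (fun i _ => hx1 i)
  have hterm : ∀ j : Fin r, x j * ∏ i ∈ Finset.univ.erase j, (1 + x i)
      = (x j / (1 + x j)) * P := by
    intro j
    have := Finset.mul_prod_erase Finset.univ (fun i => 1 + x i) (Finset.mem_univ j)
    rw [hP, ← this]
    rw [div_mul_eq_mul_div, eq_div_iff (hx1 j).ne']
    ring
  have hsum : ∑ j, x j / (1 + x j) = 1 / 2 := by
    rw [hFbar] at hF
    simp_rw [hterm] at hF
    rw [← Finset.sum_mul] at hF
    have h2 : P * (1 - 2 * ∑ j, x j / (1 + x j)) = 0 := by ring_nf; ring_nf at hF; linarith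
    rcases mul_eq_zero.mp h2 with h | h
    · exact absurd h (ne_of_gt hPpos)
    · linarith
  set last : Fin r := ⟨r - 1, by omega⟩ with hlastdef
  -- bound on the last term
  have hxlast : x last ≤ 1 / 3 := by
    have h3 : Real.exp (-Real.log 3) = 1 / 3 := by
      rw [Real.exp_neg, Real.exp_log (by norm_num : (0:ℝ) < 3)]
      norm_num
    have h1 : Real.exp (-ℓ last) ≤ Real.exp (-Real.log 3) :=
      Real.exp_le_exp.mpr (by linarith [hlast])
    rw [h3] at h1
    exact h1
  have hglast : x last / (1 + x last) ≤ 1 / 4 := by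
    rw [div_le_iff₀ (hx1 last)]
    linarith [hx0 last]
  -- the remaining sum is at least 1/4
  have hsplit : ∑ j ∈ Finset.univ.erase last, x j / (1 + x j) + x last / (1 + x last)
      = ∑ j, x j / (1 + x j) :=
    Finset.sum_erase_add _ _ (Finset.mem_univ last)
  have hrest : (1:ℝ) / 4 ≤ ∑ j ∈ Finset.univ.erase last, x j / (1 + x j) := by
    rw [hsum] at hsplit; linarith
  -- pigeonhole
  have hcard : (Finset.univ.erase last).card = r - 1 := by
    rw [Finset.card_erase_of_mem (Finset.mem_univ last), Finset.card_univ, Fintype.card_fin]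
  have hne : (Finset.univ.erase last).Nonempty := by
    rw [← Finset.card_pos, hcard]; omega
  set R : ℝ := (r : ℝ) with hRdef
  have hR2 : (2:ℝ) ≤ R := by rw [hRdef]; exact_mod_cast hr
  have hR1 : R - 1 ≠ 0 := by intro h; linarith
  have hconst : ∑ _j ∈ Finset.univ.erase last, (1 / (4 * (R - 1)) : ℝ) = 1 / 4 := by
    rw [Finset.sum_const, hcard, nsmul_eq_mul]
    have : ((r - 1 : ℕ) : ℝ) = R - 1 := by
      rw [hRdef]; push_cast [Nat.cast_sub (by omega : 1 ≤ r)]; ring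
    rw [this]
    field_simp [hR1]
  have hle : ∑ _j ∈ Finset.univ.erase last, (1 / (4 * (R - 1)) : ℝ)
      ≤ ∑ j ∈ Finset.univ.erase last, x j / (1 + x j) := by
    rw [hconst]; exact hrest
  obtain ⟨j, hjmem, hj⟩ := Finset.exists_le_of_sum_le hne hle
  refine ⟨j, ?_, ?_⟩
  · have hjne : j ≠ last := Finset.ne_of_mem_erase hjmem
    have hvne : (j : ℕ) ≠ r - 1 := by
      intro h
      exact hjne (Fin.ext (by simp [hlastdef, h]))
    have := j.isLt
    omega
  · have h45 : (0:ℝ) < 4 * R - 5 := by linarith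
    rw [div_le_div_iff₀ (by linarith : (0:ℝ) < 4 * (R - 1)) (hx1 j)] at hj
    have hkey : 1 ≤ (4 * R - 5) * x j := by nlinarith [hx0 j]
    have hexp : Real.exp (ℓ j) * x j = 1 := by
      show Real.exp (ℓ j) * Real.exp (-ℓ j) = 1
      rw [← Real.exp_add]; simp
    have hE : Real.exp (ℓ j) ≤ 4 * R - 5 := by
      nlinarith [Real.exp_pos (ℓ j), hx0 j,
        mul_le_mul_of_nonneg_left hkey (le_of_lt (Real.exp_pos (ℓ j)))]
    exact (Real.le_log_iff_exp_le h45).mpr hE
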